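/- Let L be a real holomorphic line bundle on a real curve (Σ,τ) with invariant divisor D = Σᵢ mᵢ pᵢ (i.e., τ(D) = D). A fixed circle C ⊂ Σ^τ is odd for L (L^{τ_L}|_C is a Möbius bundle) if and only if Σ_{pᵢ ∈ C} mᵢ ≡ 1 mod 2. Consequently, the total degree of L is congruent mod 2 to the number of odd circles plus the contribution from points off Σ^τ, which is even; hence deg(L) ≡ (number of odd circles of L) mod 2. -/
import Mathlib

open scoped Classical

/-- For a real holomorphic line bundle `L = 𝒪(D)` on a real curve, given by a `τ`-invariant
divisor `D`, a fixed circle `C` of `τ` is odd for `L` iff `∑_{pᵢ ∈ C} mᵢ` is odd; the degree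
of `L` is congruent mod 2 to the number of odd circles. Model: `τ` an involution, `D` a
finitely supported `ℤ`-valued divisor with `τ(D) = D`, and `Circ i` the components (circles)
of the fixed point set of `τ`. -/
theorem degree_mod_two_eq_odd_circles {S ι : Type*} [Fintype ι]
    (τ : S → S) (hτ : ∀ p, τ (τ p) = p)
    (D : S →₀ ℤ) (hD : ∀ p, D (τ p) = D p)
    (Circ : ι → Set S)
    (hdisj : ∀ i j, i ≠ j → Disjoint (Circ i) (Circ j))
    (hcover : (⋃ i, Circ i) = {p | τ p = p}) :
    (D.sum fun _ m => m) % 2 =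
      (((Finset.univ : Finset ι).filter
        (fun i => ¬ (2 ∣ ∑ p ∈ D.support.filter (· ∈ Circ i), D p))).card : ℤ) % 2 := by
  suffices h : ((D.sum fun _ m => m : ℤ) : ZMod 2)
      = ((((Finset.univ : Finset ι).filter
        (fun i => ¬ (2 ∣ ∑ p ∈ D.support.filter (· ∈ Circ i), D p))).card : ℤ) : ZMod 2) by
    have := (ZMod.intCast_eq_intCast_iff _ _ 2).mp h
    simpa [Int.ModEq] using this
  have fix : ∀ p : S, τ p = p ↔ ∃ i, p ∈ Circ i := by
    intro p
    rw [← Set.mem_setOf_eq (p := fun p => τ p = p), ← hcover]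
    simp [Set.mem_iUnion]
  -- decompose support into fixed and non-fixed
  have hsplit := Finset.sum_filter_add_sum_filter_not D.support (fun p => τ p = p)
      (fun p => ((D p : ZMod 2)))
  have hnonfix : ∑ p ∈ D.support.filter (fun p => ¬ τ p = p), ((D p : ZMod 2)) = 0 := by
    apply Finset.sum_involution (fun p _ => τ p)
    · intro a ha
      rw [hD a]
      exact CharTwo.add_self_eq_zero _
    · intro a ha _
      simp only [Finset.mem_filter] at ha
      exact ha.2
    · intro a ha
      simp only [Finset.mem_filter, Finsupp.mem_support_iff] at ha ⊢
      refine ⟨by rw [hD]; exact ha.1, fun h => ha.2 ?_⟩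
      have h2 := hτ a
      rw [h] at h2
      exact h2
    · intro a ha; exact hτ a
  -- fixed part as biUnion over circles
  have hbi : D.support.filter (fun p => τ p = p)
      = Finset.univ.biUnion (fun i => D.support.filter (· ∈ Circ i)) := by
    ext p
    simp only [Finset.mem_filter, Finset.mem_biUnion, Finset.mem_univ, true_and]
    constructor
    · rintro ⟨hp, hfix⟩
      obtain ⟨i, hi⟩ := (fix p).mp hfix
      exact ⟨i, hp, hi⟩
    · rintro ⟨i, hp, hi⟩
      exact ⟨hp, (fix p).mpr ⟨i, hi⟩⟩
  have hfixsum : ∑ p ∈ D.support.filter (fun p => τ p = p), ((D p : ZMod 2))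
      = ∑ i : ι, ∑ p ∈ D.support.filter (· ∈ Circ i), ((D p : ZMod 2)) := by
    rw [hbi]
    apply Finset.sum_biUnion
    intro i _ j _ hij
    apply Finset.disjoint_filter_filter'
    exact hdisj i j hij
  have hLHS : ((D.sum fun _ m => m : ℤ) : ZMod 2)
      = ∑ p ∈ D.support, ((D p : ZMod 2)) := by
    rw [Finsupp.sum]; push_cast; rfl
  rw [hLHS, ← hsplit, hnonfix, add_zero, hfixsum]
  -- each circle contributes its parity
  have hterm : ∀ i : ι, ∑ p ∈ D.support.filter (· ∈ Circ i), ((D p : ZMod 2))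
      = if ¬ (2 ∣ ∑ p ∈ D.support.filter (· ∈ Circ i), D p) then 1 else 0 := by
    intro i
    have : ((∑ p ∈ D.support.filter (· ∈ Circ i), D p : ℤ) : ZMod 2)
        = ∑ p ∈ D.support.filter (· ∈ Circ i), ((D p : ZMod 2)) := by push_cast; rfl
    rw [← this]
    by_cases h : 2 ∣ ∑ p ∈ D.support.filter (· ∈ Circ i), D p
    · simp [h, (ZMod.intCast_zmod_eq_zero_iff_dvd _ 2).mpr h]
    · simp only [h, not_false_iff, if_true]
      rcases (by decide : ∀ x : ZMod 2, x = 0 ∨ x = 1)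
          ((∑ p ∈ D.support.filter (· ∈ Circ i), D p : ℤ) : ZMod 2) with h0 | h1
      · exact absurd ((ZMod.intCast_zmod_eq_zero_iff_dvd _ 2).mp h0) h
      · exact h1
  simp only [hterm]
  rw [Finset.sum_boole]
  push_cast
  ring
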